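/- Let G be a simple graph on n ≥ 7 vertices with Δ(G) ≤ n−3, let r ≥ 1 be an integer, and let u be a vertex of G that is not the unique vertex of degree Δ(G) (i.e., either deg(u,G) < Δ(G) or there exists v ≠ u with deg(v,G) = Δ(G)). Define the finite sets D = { deg_r(x, G−v) : v ∈ V(G)∖{u}, x ∈ V(G)∖{v}, deg(x, G−v) = Δ(G) } and M = { κ_r(G−v) : v ∈ V(G)∖{u}, deg(v,G) = Δ(G) }; both D and M are nonempty. Then κ_r(G) = min D + max M, or κ_r(G) = max D + min M. -/

import Mathlib

open SimpleGraph

/-- `kappa G r` is the number of `r`-cliques of the graph `G`. -/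
noncomputable def kappa {V : Type*} (G : SimpleGraph V) (r : ℕ) : ℕ :=
  (G.cliqueSet r).ncard

/-- `degR G r v` is the number of `r`-cliques of `G` that contain the vertex `v`. -/
noncomputable def degR {V : Type*} (G : SimpleGraph V) (r : ℕ) (v : V) : ℕ :=
  {s | s ∈ G.cliqueSet r ∧ v ∈ s}.ncard

/-- `deg G v` is the degree of the vertex `v` in `G`. -/
noncomputable def deg {V : Type*} (G : SimpleGraph V) (v : V) : ℕ :=
  (G.neighborSet v).ncard

/-- `gcard G v` is the card `G - v`: the induced subgraph of `G` on `V(G) \ {v}`. -/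
def gcard {V : Type*} (G : SimpleGraph V) (v : V) : SimpleGraph {x : V // x ≠ v} :=
  G.induce {x : V | x ≠ v}

/-- The maximum degree `Δ(G)`. -/
noncomputable def maxDeg {n : ℕ} (G : SimpleGraph (Fin n)) : ℕ :=
  Finset.univ.sup (fun v => deg G v)

/-- The minimum degree `δ(G)`. -/
noncomputable def minDeg {n : ℕ} (G : SimpleGraph (Fin n)) : ℕ :=
  sInf (Set.range (fun v => deg G v))

/-- `ℓ(G)`: the number of vertices of maximum degree. -/
noncomputable def numMaxDeg {n : ℕ} (G : SimpleGraph (Fin n)) : ℕ :=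
  (Finset.univ.filter (fun v => deg G v = maxDeg G)).card

/-- `G` and `H` share `n-1` cards via the vertices `u`, `w` and the bijection `π`:
for every `v ≠ u`, the card `G - v` is isomorphic to the card `H - π(v)`. -/
def ShareCardsVia {n : ℕ} (G H : SimpleGraph (Fin n)) (u w : Fin n)
    (π : {x : Fin n // x ≠ u} ≃ {y : Fin n // y ≠ w}) : Prop :=
  ∀ v : {x : Fin n // x ≠ u}, Nonempty (gcard G v.1 ≃g gcard H (π v).1)

/-- `G` and `H` share `n-1` cards. -/
def ShareCards {n : ℕ} (G H : SimpleGraph (Fin n)) : Prop :=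
  ∃ (u w : Fin n) (π : {x : Fin n // x ≠ u} ≃ {y : Fin n // y ≠ w}),
    ShareCardsVia G H u w π

variable {n : ℕ} {G : SimpleGraph (Fin n)} {v : Fin n} {r : ℕ}

lemma gcard_adj {a b : {x : Fin n // x ≠ v}} : (gcard G v).Adj a b ↔ G.Adj a.1 b.1 := by
  simp [gcard]

lemma isNClique_gcard_iff {s : Finset {x : Fin n // x ≠ v}} :
    (gcard G v).IsNClique r s ↔ G.IsNClique r (s.map (Function.Embedding.subtype _)) := by
  simp only [isNClique_iff, Finset.card_map, and_congr_left_iff]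
  intro _
  constructor
  · intro h a ha b hb hab
    simp only [Finset.coe_map, Set.mem_image, Finset.mem_coe] at ha hb
    obtain ⟨a', ha', rfl⟩ := ha
    obtain ⟨b', hb', rfl⟩ := hb
    exact gcard_adj.1 (h ha' hb' (fun e => hab (congrArg _ e)))
  · intro h a ha b hb hab
    refine gcard_adj.2 (h ?_ ?_ (Subtype.val_injective.ne hab)) <;>
      · simp only [Finset.coe_map, Set.mem_image, Finset.mem_coe]
        exact ⟨_, by assumption, rfl⟩

lemma image_cliqueSet_gcard :
    (fun s => s.map (Function.Embedding.subtype _)) '' (gcard G v).cliqueSet r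
      = {s | s ∈ G.cliqueSet r ∧ v ∉ s} := by
  ext s
  constructor
  · rintro ⟨t, ht, rfl⟩
    refine ⟨isNClique_gcard_iff.1 ht, ?_⟩
    simp only [Finset.mem_map, Function.Embedding.coe_subtype]
    rintro ⟨⟨a, ha⟩, -, h⟩
    exact ha h
  · rintro ⟨hs, hv⟩
    have hmap : (s.subtype (· ≠ v)).map (Function.Embedding.subtype _) = s := by
      ext a
      simp only [Finset.mem_map, Finset.mem_subtype, Function.Embedding.coe_subtype,
        Subtype.exists, exists_and_left, exists_prop, exists_eq_right_right]
      exact ⟨fun h => h.1, fun ha => ⟨ha, fun e => hv (e ▸ ha)⟩⟩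
    refine ⟨s.subtype (· ≠ v), ?_, hmap⟩
    rw [mem_cliqueSet_iff] at hs ⊢
    rw [isNClique_gcard_iff, hmap]
    exact hs

lemma map_inj : Function.Injective
    (fun s : Finset {x : Fin n // x ≠ v} => s.map (Function.Embedding.subtype _)) :=
  fun _ _ h => Finset.map_injective _ h

lemma kappa_gcard : kappa (gcard G v) r = {s | s ∈ G.cliqueSet r ∧ v ∉ s}.ncard := by
  rw [kappa, ← image_cliqueSet_gcard, Set.ncard_image_of_injective _ map_inj]

lemma kappa_split : kappa G r = kappa (gcard G v) r + degR G r v := by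
  rw [kappa_gcard, degR, kappa, ← Set.ncard_union_eq ?_ (Set.toFinite _) (Set.toFinite _)]
  · congr 1
    ext s
    by_cases hv : v ∈ s <;> simp [hv, Set.mem_setOf_eq]
  · rw [Set.disjoint_left]
    rintro s ⟨-, h⟩ ⟨-, h2⟩
    exact h h2

lemma image_degR_set_gcard {x : {y : Fin n // y ≠ v}} (hna : ¬ G.Adj x.1 v) :
    (fun s => s.map (Function.Embedding.subtype _)) ''
        {s | s ∈ (gcard G v).cliqueSet r ∧ x ∈ s}
      = {s | s ∈ G.cliqueSet r ∧ x.1 ∈ s} := by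
  ext s
  constructor
  · rintro ⟨t, ⟨ht, hx⟩, rfl⟩
    have : t.map (Function.Embedding.subtype _) ∈
        (fun s => s.map (Function.Embedding.subtype (· ≠ v))) '' (gcard G v).cliqueSet r :=
      ⟨t, ht, rfl⟩
    rw [image_cliqueSet_gcard] at this
    exact ⟨this.1, Finset.mem_map_of_mem _ hx⟩
  · rintro ⟨hs, hx⟩
    have hv : v ∉ s := by
      intro hvs
      exact hna (hs.1 hx hvs x.2)
    have : s ∈ (fun s => s.map (Function.Embedding.subtype (· ≠ v))) ''
        (gcard G v).cliqueSet r := by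
      rw [image_cliqueSet_gcard]; exact ⟨hs, hv⟩
    obtain ⟨t, ht, rfl⟩ := this
    refine ⟨t, ⟨ht, ?_⟩, rfl⟩
    simp only [Finset.mem_map, Function.Embedding.coe_subtype] at hx
    obtain ⟨a, ha, hax⟩ := hx
    rwa [Subtype.val_injective hax] at ha

lemma degR_gcard {x : {y : Fin n // y ≠ v}} (hna : ¬ G.Adj x.1 v) :
    degR (gcard G v) r x = degR G r x.1 := by
  rw [degR, degR, ← image_degR_set_gcard hna, Set.ncard_image_of_injective _ map_inj]

lemma deg_gcard {x : {y : Fin n // y ≠ v}} :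
    deg (gcard G v) x = (G.neighborSet x.1 \ {v}).ncard := by
  rw [deg]
  have himg : Subtype.val '' ((gcard G v).neighborSet x) = G.neighborSet x.1 \ {v} := by
    ext a
    simp only [Set.mem_image, mem_neighborSet, Set.mem_diff, Set.mem_singleton_iff]
    constructor
    · rintro ⟨b, hb, rfl⟩
      exact ⟨gcard_adj.1 hb, b.2⟩
    · rintro ⟨ha, hav⟩
      exact ⟨⟨a, hav⟩, gcard_adj.2 ha, rfl⟩
  rw [← himg, Set.ncard_image_of_injective _ Subtype.val_injective]

lemma deg_le_maxDeg (x : Fin n) : deg G x ≤ maxDeg G :=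
  Finset.le_sup (Finset.mem_univ x)

lemma deg_gcard_eq_maxDeg_iff {x : {y : Fin n // y ≠ v}} :
    deg (gcard G v) x = maxDeg G ↔ deg G x.1 = maxDeg G ∧ ¬ G.Adj x.1 v := by
  rw [deg_gcard]
  by_cases h : G.Adj x.1 v
  · have hv : v ∈ G.neighborSet x.1 := h
    rw [Set.ncard_diff_singleton_of_mem hv]
    have h1 : 1 ≤ (G.neighborSet x.1).ncard :=
      (Set.ncard_pos (Set.toFinite _)).2 ⟨v, hv⟩
    have h2 : (G.neighborSet x.1).ncard ≤ maxDeg G := deg_le_maxDeg x.1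
    constructor
    · intro he; omega
    · rintro ⟨-, hc⟩; exact absurd h hc
  · have hv : v ∉ G.neighborSet x.1 := h
    rw [Set.diff_singleton_eq_self hv]
    show _ ↔ deg G x.1 = _ ∧ _
    rw [deg]
    tauto

lemma degR_le_kappa (x : Fin n) : degR G r x ≤ kappa G r :=
  Set.ncard_le_ncard (fun s hs => hs.1) (Set.toFinite _)


theorem two_choices {n : ℕ} (hn : 7 ≤ n) (G : SimpleGraph (Fin n))
    (hDelta : maxDeg G ≤ n - 3) (r : ℕ) (hr : 1 ≤ r) (u : Fin n)
    (hu : deg G u < maxDeg G ∨ ∃ v : Fin n, v ≠ u ∧ deg G v = maxDeg G) :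
    let D : Set ℕ := {d | ∃ v : Fin n, v ≠ u ∧ ∃ x : {y : Fin n // y ≠ v},
      deg (gcard G v) x = maxDeg G ∧ d = degR (gcard G v) r x}
    let M : Set ℕ := {m | ∃ v : Fin n, v ≠ u ∧ deg G v = maxDeg G ∧
      m = kappa (gcard G v) r}
    D.Nonempty ∧ M.Nonempty ∧
      (kappa G r = sInf D + sSup M ∨ kappa G r = sSup D + sInf M) := by
  intro D M
  set Δ := maxDeg G with hΔdef
  set f := degR G r with hfdef
  set k := kappa G r with hkdef
  set A : Set (Fin n) := {x | deg G x = Δ} with hAdef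
  set B : Set (Fin n) := {x | deg G x = Δ ∧ x ≠ u} with hBdef
  -- B is nonempty
  have hBne : B.Nonempty := by
    rcases hu with hlt | ⟨v, hvu, hvd⟩
    · obtain ⟨x₀, -, hx₀⟩ := Finset.exists_mem_eq_sup Finset.univ
        (Finset.univ_nonempty_iff.2 ⟨⟨0, by omega⟩⟩) (fun v => deg G v)
      have hd : deg G x₀ = Δ := hx₀.symm
      exact ⟨x₀, hd, fun e => absurd (e ▸ hd) (Nat.ne_of_lt hlt)⟩
    · exact ⟨v, hvd, hvu⟩
  have hBA : B ⊆ A := fun x hx => hx.1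
  -- D = f '' A
  have hDA : D = f '' A := by
    ext d
    constructor
    · rintro ⟨v, hvu, x, hx, rfl⟩
      obtain ⟨hxd, hxa⟩ := deg_gcard_eq_maxDeg_iff.1 hx
      exact ⟨x.1, hxd, (degR_gcard hxa).symm⟩
    · rintro ⟨x, hx, rfl⟩
      -- find v ≠ u, v ≠ x, not adjacent to x
      have : {v : Fin n | v ≠ u ∧ v ≠ x ∧ ¬ G.Adj x v}.Nonempty := by
        by_contra hemp
        rw [Set.not_nonempty_iff_eq_empty] at hemp
        have hcompl : (Set.univ : Set (Fin n)) ⊆ {u} ∪ ({x} ∪ G.neighborSet x) := by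
          intro v _
          by_contra hv
          simp only [Set.mem_union, Set.mem_singleton_iff, mem_neighborSet, not_or] at hv
          have : v ∈ {v : Fin n | v ≠ u ∧ v ≠ x ∧ ¬ G.Adj x v} :=
            ⟨hv.1, hv.2.1, hv.2.2⟩
          rw [hemp] at this
          exact this
        have h1 : (Set.univ : Set (Fin n)).ncard = n := by
          rw [Set.ncard_univ]; simp
        have h2 : ({u} ∪ ({x} ∪ G.neighborSet x) : Set (Fin n)).ncard
            ≤ 1 + (1 + Δ) := by
          refine le_trans (Set.ncard_union_le _ _) ?_
          gcongr
          · simp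
          refine le_trans (Set.ncard_union_le _ _) ?_
          gcongr
          · simp
          · exact deg_le_maxDeg x
        have h3 := Set.ncard_le_ncard hcompl (Set.toFinite _)
        omega
      obtain ⟨v, hvu, hvx, hva⟩ := this
      have hxv : x ≠ v := fun e => hvx e.symm
      exact ⟨v, hvu, ⟨x, hxv⟩, deg_gcard_eq_maxDeg_iff.2 ⟨hx, hva⟩,
        (degR_gcard (x := ⟨x, hxv⟩) hva).symm⟩
  -- M = (k - f ·) '' B
  have hkv : ∀ v : Fin n, kappa (gcard G v) r = k - f v := by
    intro v
    have h1 : k = kappa (gcard G v) r + f v := kappa_split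
    omega
  have hMB : M = (fun x => k - f x) '' B := by
    ext m
    constructor
    · rintro ⟨v, hvu, hvd, rfl⟩
      exact ⟨v, ⟨hvd, hvu⟩, (hkv v).symm⟩
    · rintro ⟨x, ⟨hxd, hxu⟩, rfl⟩
      exact ⟨x, hxu, hxd, (hkv x).symm⟩
  have hAne : A.Nonempty := hBne.mono hBA
  have hDne : D.Nonempty := by rw [hDA]; exact hAne.image f
  have hMne : M.Nonempty := by rw [hMB]; exact hBne.image _
  refine ⟨hDne, hMne, ?_⟩
  -- abbreviations
  set fA := f '' A with hfA
  set fB := f '' B with hfB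
  have hfBA : fB ⊆ fA := Set.image_mono hBA
  have hfAne : fA.Nonempty := hAne.image f
  have hfBne : fB.Nonempty := hBne.image f
  have hfk : ∀ y ∈ fA, y ≤ k := by
    rintro y ⟨x, -, rfl⟩
    exact degR_le_kappa x
  set IA := sInf fA
  set SA := sSup fA
  set IB := sInf fB
  set SB := sSup fB
  have hIAmem : IA ∈ fA := Nat.sInf_mem hfAne
  have hIBmem : IB ∈ fB := Nat.sInf_mem hfBne
  have hSAmem : SA ∈ fA := hfAne.csSup_mem ((Set.toFinite A).image f)
  have hSBmem : SB ∈ fB := hfBne.csSup_mem ((Set.toFinite B).image f)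
  have hIAB : IA ≤ IB := Nat.sInf_le (hfBA hIBmem)
  have hSBA : SB ≤ SA :=
    le_csSup (Set.Finite.image f (Set.toFinite A)).bddAbove (hfBA hSBmem)
  have hIBSB : IB ≤ SB :=
    le_csSup (Set.Finite.image f (Set.toFinite B)).bddAbove hIBmem
  have hSBk : SB ≤ k := hfk _ (hfBA hSBmem)
  have hIBk : IB ≤ k := hfk _ (hfBA hIBmem)
  -- key dichotomy
  have hAuB : ∀ x ∈ A, x ∉ B → x = u := by
    rintro x hx hxB
    by_contra hxu
    exact hxB ⟨hx, hxu⟩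
  have key : IA = IB ∨ SA = SB := by
    by_contra hc
    push_neg at hc
    obtain ⟨hI, hS⟩ := hc
    obtain ⟨a, ha, hfa⟩ := hIAmem
    obtain ⟨a', ha', hfa'⟩ := hSAmem
    have haB : a ∉ B := fun hb => hI (le_antisymm hIAB (Nat.sInf_le ⟨a, hb, hfa⟩))
    have haB' : a' ∉ B := by
      intro hb
      apply hS
      refine le_antisymm ?_ hSBA
      rw [← hfa']
      exact le_csSup ((Set.toFinite B).image f).bddAbove ⟨a', hb, rfl⟩
    have hau : a = u := hAuB a ha haB
    have hau' : a' = u := hAuB a' ha' haB'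
    have heq : IA = SA := by rw [← hfa, ← hfa', hau, hau']
    omega
  -- compute sSup M and sInf M
  have hsSupM : sSup M = k - IB := by
    rw [hMB]
    apply le_antisymm
    · refine csSup_le (hBne.image _) ?_
      rintro m ⟨x, hx, rfl⟩
      have : IB ≤ f x := Nat.sInf_le ⟨x, hx, rfl⟩
      show k - f x ≤ k - IB
      omega
    · obtain ⟨b, hb, hfb⟩ := hIBmem
      exact le_csSup (Set.Finite.image _ (Set.toFinite B)).bddAbove
        ⟨b, hb, show k - f b = k - IB by rw [hfb]⟩
  have hsInfM : sInf M = k - SB := by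
    rw [hMB]
    apply le_antisymm
    · obtain ⟨b, hb, hfb⟩ := hSBmem
      exact Nat.sInf_le ⟨b, hb, show k - f b = k - SB by rw [hfb]⟩
    · refine le_csInf (hBne.image _) ?_
      rintro m ⟨x, hx, rfl⟩
      have : f x ≤ SB := le_csSup (Set.Finite.image f (Set.toFinite B)).bddAbove ⟨x, hx, rfl⟩
      show k - SB ≤ k - f x
      omega
  have hDfA : sInf D = IA ∧ sSup D = SA := by rw [hDA]; exact ⟨rfl, rfl⟩
  rcases key with h | h
  · left
    rw [hDfA.1, hsSupM, h]
    omega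
  · right
    rw [hDfA.2, hsInfM, h]
    omega
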